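/- arXiv:0709.4116 — 4 statements merged into one kernel-verified Lean document; each statement's English description precedes it below -/
import Mathlib

section
/- Let R be a commutative ring. The substitution ring homomorphism from the formal power series ring R[[c₁, c₂]] to the formal power series ring R[[t₁, t₂]] that sends c₁ to t₁ + t₂ and c₂ to t₁·t₂ is injective. -/
/-- Substitution of multivariate polynomials (each with zero constant term) into a
multivariate formal power series, defined coefficientwise: only source monomials of
total degree at most the total degree of the target monomial can contribute, and these
form a finite set. -/
noncomputable def substPowerSeries {R : Type*} [CommRing R] {σ τ : Type*}
    [Fintype σ] [DecidableEq σ] (a : σ → MvPolynomial τ R)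
    (f : MvPowerSeries σ R) : MvPowerSeries τ R :=
  fun d : τ →₀ ℕ =>
    ∑ e ∈ Finset.Iic (Finsupp.equivFunOnFinite.symm fun _ : σ => d.sum fun _ k => k),
      MvPowerSeries.coeff e f * MvPolynomial.coeff d (∏ i, a i ^ e i)

namespace SubstAux

open MvPolynomial

/-- The finitely supported function on `Fin 2` with values `a`, `b`. -/
noncomputable def D (a b : ℕ) : Fin 2 →₀ ℕ := Finsupp.single 0 a + Finsupp.single 1 b

@[simp] lemma D_apply_zero (a b : ℕ) : D a b 0 = a := by
  simp [D, Finsupp.single_apply]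

@[simp] lemma D_apply_one (a b : ℕ) : D a b 1 = b := by
  simp [D, Finsupp.single_apply]

lemma eq_D (d : Fin 2 →₀ ℕ) : d = D (d 0) (d 1) := by
  ext i
  fin_cases i <;> simp [D, Finsupp.single_apply]

lemma D_le_D {a b a' b' : ℕ} (h1 : a ≤ a') (h2 : b ≤ b') : D a b ≤ D a' b' := by
  intro i
  fin_cases i <;> simp [D, Finsupp.single_apply, h1, h2]

lemma D_sub_D {a b c : ℕ} : D a b - D c c = D (a - c) (b - c) := by
  ext i
  fin_cases i <;> simp [D, Finsupp.single_apply]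

lemma D_le_D_iff {a b a' b' : ℕ} : D a b ≤ D a' b' ↔ a ≤ a' ∧ b ≤ b' := by
  constructor
  · intro h
    exact ⟨by simpa using h 0, by simpa using h 1⟩
  · rintro ⟨h1, h2⟩
    exact D_le_D h1 h2

variable {R : Type*} [CommRing R]

lemma coeff_sum_pow (n a b : ℕ) :
    MvPolynomial.coeff (D a b) ((X 0 + X 1 : MvPolynomial (Fin 2) R) ^ n)
      = if a + b = n then (n.choose a : R) else 0 := by
  rw [add_pow, coeff_sum]
  have hterm : ∀ k ∈ Finset.range (n + 1),
      MvPolynomial.coeff (D a b)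
        ((X 0 : MvPolynomial (Fin 2) R) ^ k * X 1 ^ (n - k) * (n.choose k : MvPolynomial (Fin 2) R))
      = if a = k ∧ b = n - k then (n.choose k : R) else 0 := by
    intro k hk
    rw [← C_eq_coe_nat, mul_comm, X_pow_eq_monomial, X_pow_eq_monomial,
      monomial_mul, one_mul, coeff_C_mul, coeff_monomial]
    have heq : (Finsupp.single (0 : Fin 2) k + Finsupp.single 1 (n - k) = D a b)
        ↔ (a = k ∧ b = n - k) := by
      constructor
      · intro h
        constructor
        · have := congrFun (congrArg (fun v : Fin 2 →₀ ℕ => (v : Fin 2 → ℕ)) h) 0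
          simpa [Finsupp.single_apply] using this.symm
        · have := congrFun (congrArg (fun v : Fin 2 →₀ ℕ => (v : Fin 2 → ℕ)) h) 1
          simpa [Finsupp.single_apply] using this.symm
      · rintro ⟨rfl, rfl⟩
        rfl
    rw [if_congr heq rfl rfl]
    split_ifs <;> simp
  rw [Finset.sum_congr rfl hterm]
  by_cases hab : a + b = n
  · rw [if_pos hab]
    rw [Finset.sum_eq_single a]
    · have : a = a ∧ b = n - a := ⟨rfl, by omega⟩
      rw [if_pos this]
    · intro k hk hka
      rw [if_neg]
      rintro ⟨rfl, -⟩
      exact hka rfl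
    · intro h
      exact absurd (Finset.mem_range.2 (by omega)) h
  · rw [if_neg hab]
    apply Finset.sum_eq_zero
    intro k hk
    rw [if_neg]
    rintro ⟨rfl, rfl⟩
    simp only [Finset.mem_range] at hk
    omega

lemma coeff_prod (e0 e1 a b : ℕ) :
    MvPolynomial.coeff (D a b)
      (((X 0 + X 1 : MvPolynomial (Fin 2) R)) ^ e0 * (X 0 * X 1) ^ e1)
      = if e1 ≤ a ∧ e1 ≤ b ∧ (a - e1) + (b - e1) = e0 then (e0.choose (a - e1) : R) else 0 := by
  have hmon : ((X 0 * X 1 : MvPolynomial (Fin 2) R)) ^ e1 = monomial (D e1 e1) 1 := by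
    rw [mul_pow, X_pow_eq_monomial, X_pow_eq_monomial, monomial_mul, one_mul, D]
  rw [hmon, coeff_mul_monomial']
  by_cases hle : D e1 e1 ≤ D a b
  · rw [if_pos hle, D_sub_D, coeff_sum_pow, mul_one]
    obtain ⟨h1, h2⟩ := D_le_D_iff.1 hle
    by_cases hs : (a - e1) + (b - e1) = e0
    · rw [if_pos hs, if_pos ⟨h1, h2, hs⟩]
    · rw [if_neg hs, if_neg (by tauto)]
  · rw [if_neg hle, if_neg (fun h => hle (D_le_D h.1 h.2.1))]

end SubstAux

open SubstAux MvPolynomial in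
/-- The substitution ring homomorphism R[[c₁, c₂]] → R[[t₁, t₂]] sending
c₁ ↦ t₁ + t₂ and c₂ ↦ t₁·t₂ is injective. -/
theorem subst_sum_prod_injective (R : Type*) [CommRing R] :
    Function.Injective (substPowerSeries
      (![MvPolynomial.X 0 + MvPolynomial.X 1, MvPolynomial.X 0 * MvPolynomial.X 1] :
        Fin 2 → MvPolynomial (Fin 2) R)) := by
  intro f g h
  suffices H : ∀ k m, MvPowerSeries.coeff (D m k) f = MvPowerSeries.coeff (D m k) g by
    apply MvPowerSeries.ext
    intro d
    rw [eq_D d]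
    exact H (d 1) (d 0)
  intro k
  induction k using Nat.strong_induction_on with
  | _ k IH =>
  intro m
  have hd := congrFun h (D (m + k) k)
  unfold substPowerSeries at hd
  -- compute the total degree bound
  have hsum : ((D (m + k) k).sum fun _ j => j) = m + 2 * k := by
    rw [Finsupp.sum_fintype _ _ (fun _ => rfl), Fin.sum_univ_two]
    simp; omega
  set E := Finsupp.equivFunOnFinite.symm (fun _ : Fin 2 => (D (m + k) k).sum fun _ j => j)
    with hE
  -- the product simplification
  have hprod : ∀ e : Fin 2 →₀ ℕ,
      (∏ i, (![MvPolynomial.X 0 + MvPolynomial.X 1,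
          MvPolynomial.X 0 * MvPolynomial.X 1] : Fin 2 → MvPolynomial (Fin 2) R) i ^ e i)
        = (X 0 + X 1 : MvPolynomial (Fin 2) R) ^ e 0 * (X 0 * X 1) ^ e 1 := by
    intro e
    rw [Fin.prod_univ_two]
    simp
  have hmem : D m k ∈ Finset.Iic E := by
    rw [Finset.mem_Iic, hE]
    intro i
    have : (Finsupp.equivFunOnFinite.symm (fun _ : Fin 2 => (D (m + k) k).sum fun _ j => j)) i
        = m + 2 * k := by
      rw [hsum]; rfl
    rw [this]
    fin_cases i <;> simp <;> omega
  -- split off the term at D m k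
  rw [← Finset.add_sum_erase _ _ hmem, ← Finset.add_sum_erase _ _ hmem] at hd
  have hothers : ∀ e ∈ (Finset.Iic E).erase (D m k),
      MvPowerSeries.coeff e f *
          MvPolynomial.coeff (D (m + k) k)
            (∏ i, (![MvPolynomial.X 0 + MvPolynomial.X 1,
              MvPolynomial.X 0 * MvPolynomial.X 1] : Fin 2 → MvPolynomial (Fin 2) R) i ^ e i)
        = MvPowerSeries.coeff e g *
          MvPolynomial.coeff (D (m + k) k)
            (∏ i, (![MvPolynomial.X 0 + MvPolynomial.X 1,
              MvPolynomial.X 0 * MvPolynomial.X 1] : Fin 2 → MvPolynomial (Fin 2) R) i ^ e i) := by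
    intro e he
    rw [hprod e, coeff_prod]
    by_cases hc : e 1 ≤ m + k ∧ e 1 ≤ k ∧ (m + k - e 1) + (k - e 1) = e 0
    · obtain ⟨h1, h2, h3⟩ := hc
      have hne : e ≠ D m k := (Finset.mem_erase.1 he).1
      have hlt : e 1 < k := by
        rcases Nat.lt_or_ge (e 1) k with hlt | hge
        · exact hlt
        · exfalso
          have he1 : e 1 = k := le_antisymm h2 hge
          have he0 : e 0 = m := by omega
          apply hne
          rw [eq_D e, he0, he1]
      have := IH (e 1) hlt (e 0)
      rw [eq_D e]
      simp only [D_apply_zero, D_apply_one]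
      rw [this]
    · rw [if_neg hc, mul_zero, mul_zero]
  rw [Finset.sum_congr rfl hothers] at hd
  have hd' := add_right_cancel hd
  -- evaluate the coefficient at the distinguished term
  rw [hprod (D m k)] at hd'
  simp only [D_apply_zero, D_apply_one] at hd'
  rw [coeff_prod] at hd'
  have hck : k ≤ m + k ∧ k ≤ k ∧ (m + k - k) + (k - k) = m := ⟨by omega, le_rfl, by omega⟩
  rw [if_pos hck] at hd'
  have : m + k - k = m := by omega
  rw [this, Nat.choose_self, Nat.cast_one, mul_one, mul_one] at hd'
  exact hd'
end

section
/- Let R be a commutative ring and n a natural number. The substitution ring homomorphism from R[[c₁, …, cₙ]] to R[[t₁, …, tₙ]] sending cᵢ to the i-th elementary symmetric polynomial eᵢ(t₁, …, tₙ) (for 1 ≤ i ≤ n) is injective. -/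
open MvPolynomial Finset

section aux
variable {R : Type*} [CommRing R] {n : ℕ}

lemma esymm_isHomogeneous (k : ℕ) : (esymm (Fin n) R k).IsHomogeneous k := by
  rw [esymm_eq_sum_subtype]
  apply IsHomogeneous.sum
  intro t _
  have := IsHomogeneous.prod (t : Finset (Fin n)) (fun i => (X i : MvPolynomial (Fin n) R))
      (fun _ => 1) (fun i _ => isHomogeneous_X R i)
  simpa [t.2] using this

lemma prodpow_isHomogeneous (e : Fin n →₀ ℕ) :
    (∏ i, (esymm (Fin n) R (i.1 + 1)) ^ e i).IsHomogeneous (∑ i, (i.1 + 1) * e i) := by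
  apply IsHomogeneous.prod
  intro i _
  exact (esymm_isHomogeneous (i.1 + 1)).pow (e i)

lemma aeval_esymm_injective (R : Type*) [CommRing R] (n : ℕ) :
    Function.Injective (aeval (fun i : Fin n => esymm (Fin n) R (i.1 + 1)) :
      MvPolynomial (Fin n) R →ₐ[R] MvPolynomial (Fin n) R) := by
  intro p q h
  apply esymmAlgHom_fin_injective R (le_refl n)
  apply Subtype.ext
  rw [esymmAlgHom_apply, esymmAlgHom_apply]
  exact h

end aux

/-- The substitution ring homomorphism R[[c₁, …, cₙ]] → R[[t₁, …, tₙ]] sending cᵢ to the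
i-th elementary symmetric polynomial eᵢ(t₁, …, tₙ) (for 1 ≤ i ≤ n) is injective. -/
theorem subst_esymm_injective (R : Type*) [CommRing R] (n : ℕ) :
    Function.Injective (substPowerSeries
      (fun i : Fin n => MvPolynomial.esymm (Fin n) R (i.1 + 1))) := by
  set a : Fin n → MvPolynomial (Fin n) R := fun i => esymm (Fin n) R (i.1 + 1) with ha
  intro f g h
  funext e
  set m : ℕ := ∑ i, (i.1 + 1) * e i with hm
  set B : Fin n →₀ ℕ := Finsupp.equivFunOnFinite.symm (fun _ => m) with hB
  set S : Finset (Fin n →₀ ℕ) := (Finset.Iic B).filter (fun e' => ∑ i, (i.1 + 1) * e' i = m)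
    with hS
  set P : MvPolynomial (Fin n) R :=
    ∑ e' ∈ S, monomial e' (f e' - g e') with hP
  have key : aeval a P = 0 := by
    have haev : aeval a P = ∑ e' ∈ S, C (f e' - g e') * ∏ i, a i ^ e' i := by
      rw [hP, map_sum]
      refine Finset.sum_congr rfl fun e' _ => ?_
      rw [aeval_monomial, Finsupp.prod_pow]
      rfl
    ext d
    rw [coeff_zero]
    by_cases hd : d.degree = m
    · have hsub := congrFun h d
      have hdd : (d.sum fun _ k => k) = m := hd
      rw [haev, coeff_sum]
      have : ∀ e' ∈ S, coeff d (C (f e' - g e') * ∏ i, a i ^ e' i)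
          = f e' * coeff d (∏ i, a i ^ e' i) - g e' * coeff d (∏ i, a i ^ e' i) := by
        intro e' _
        rw [coeff_C_mul, sub_mul]
      rw [Finset.sum_congr rfl this, Finset.sum_sub_distrib]
      have hfull : ∀ (u : MvPowerSeries (Fin n) R),
          ∑ e' ∈ S, u e' * coeff d (∏ i, a i ^ e' i)
          = ∑ e' ∈ Finset.Iic B, u e' * coeff d (∏ i, a i ^ e' i) := by
        intro u
        rw [hS]
        apply Finset.sum_filter_of_ne
        intro e' _ hne
        by_contra hw
        have h0 : coeff d (∏ i, a i ^ e' i) = 0 :=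
          (prodpow_isHomogeneous (R := R) e').coeff_eq_zero (by rw [hd]; exact fun hc => hw hc.symm)
        exact hne (by rw [h0, mul_zero])
      rw [hfull f, hfull g, sub_eq_zero]
      have hB' : Finsupp.equivFunOnFinite.symm (fun _ : Fin n => d.sum fun _ k => k) = B := by
        rw [hB, hdd]
      rw [substPowerSeries, substPowerSeries] at hsub
      rw [hB'] at hsub
      exact hsub
    · rw [haev]
      have : (∑ e' ∈ S, C (f e' - g e') * ∏ i, a i ^ e' i).IsHomogeneous m := by
        apply IsHomogeneous.sum
        intro e' he'
        rw [hS, Finset.mem_filter] at he'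
        have := ((prodpow_isHomogeneous (R := R) e').C_mul (f e' - g e'))
        rw [he'.2] at this
        exact this
      exact this.coeff_eq_zero hd
  have hP0 : P = 0 := aeval_esymm_injective R n (by rw [key, map_zero])
  have heS : e ∈ S := by
    rw [hS, Finset.mem_filter]
    refine ⟨?_, rfl⟩
    rw [Finset.mem_Iic]
    intro i
    have h1 : (i.1 + 1) * e i ≤ m := Finset.single_le_sum (f := fun i => (i.1 + 1) * e i)
      (fun _ _ => Nat.zero_le _) (Finset.mem_univ i)
    have h2 : e i ≤ (i.1 + 1) * e i := Nat.le_mul_of_pos_left _ (Nat.succ_pos _)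
    have : B i = m := rfl
    omega
  have := congrArg (coeff e) hP0
  rw [hP, coeff_sum, coeff_zero] at this
  rw [Finset.sum_eq_single e (fun e' _ hne => by rw [coeff_monomial, if_neg hne])
    (fun habs => absurd heS habs)] at this
  rw [coeff_monomial, if_pos rfl] at this
  exact sub_eq_zero.mp this
end

section
/- Let R be a commutative ring and n a natural number. Every formal power series f ∈ R[[t₁, …, tₙ]] that is fixed by the action of every permutation of {1, …, n} permuting the variables lies in the image of the substitution ring homomorphism R[[c₁, …, cₙ]] → R[[t₁, …, tₙ]] sending cᵢ to the i-th elementary symmetric polynomial eᵢ(t₁, …, tₙ). -/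
section Aux

variable {R : Type*} [CommRing R] {n : ℕ}

lemma esymm_isHom (σ : Type*) [Fintype σ] (R : Type*) [CommRing R] (k : ℕ) :
    (MvPolynomial.esymm σ R k).IsHomogeneous k := by
  classical
  rw [MvPolynomial.esymm]
  apply MvPolynomial.IsHomogeneous.sum
  intro t ht
  have h := MvPolynomial.IsHomogeneous.prod t (fun i => (MvPolynomial.X i : MvPolynomial σ R))
    (fun _ => 1) (fun i _ => MvPolynomial.isHomogeneous_X _ _)
  rwa [Finset.sum_const, smul_eq_mul, mul_one,
    (Finset.mem_powersetCard.mp ht).2] at h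

lemma degree_fintype (d : Fin n →₀ ℕ) : d.degree = ∑ i, d i := by
  rw [show d.degree = d.sum fun _ k => k from rfl]
  exact Finsupp.sum_fintype _ _ (fun _ => rfl)

lemma degree_equivMapDomain (g : Equiv.Perm (Fin n)) (d : Fin n →₀ ℕ) :
    (Finsupp.equivMapDomain g d).degree = d.degree := by
  rw [degree_fintype, degree_fintype]
  simp only [Finsupp.equivMapDomain_apply]
  exact Equiv.sum_comp g.symm (fun i => d i)

noncomputable def homComponent (f : MvPowerSeries (Fin n) R) (m : ℕ) :
    MvPolynomial (Fin n) R :=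
  ∑ d ∈ (Finset.Iic (Finsupp.equivFunOnFinite.symm fun _ : Fin n => m)).filter
      (fun d => d.degree = m),
    MvPolynomial.monomial d (MvPowerSeries.coeff d f)

lemma mem_filt {d : Fin n →₀ ℕ} {m : ℕ} :
    d ∈ (Finset.Iic (Finsupp.equivFunOnFinite.symm fun _ : Fin n => m)).filter
      (fun d => d.degree = m) ↔ d.degree = m := by
  simp only [Finset.mem_filter, Finset.mem_Iic, and_iff_right_iff_imp]
  intro h
  rw [Finsupp.le_def]
  intro i
  simpa [h] using (Finsupp.le_degree i d).trans_eq h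

lemma coeff_homComponent (f : MvPowerSeries (Fin n) R) (m : ℕ) (d : Fin n →₀ ℕ) :
    MvPolynomial.coeff d (homComponent f m)
      = if d.degree = m then MvPowerSeries.coeff d f else 0 := by
  rw [homComponent, MvPolynomial.coeff_sum]
  simp only [MvPolynomial.coeff_monomial]
  rw [Finset.sum_ite_eq' _ d (fun d => MvPowerSeries.coeff d f)]
  by_cases h : d.degree = m
  · rw [if_pos (mem_filt.mpr h), if_pos h]
  · rw [if_neg (fun hm => h (mem_filt.mp hm)), if_neg h]

lemma homComponent_isSymmetric (f : MvPowerSeries (Fin n) R)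
    (hf : ∀ (g : Equiv.Perm (Fin n)) (d : Fin n →₀ ℕ),
      MvPowerSeries.coeff (Finsupp.equivMapDomain g d) f = MvPowerSeries.coeff d f)
    (m : ℕ) : (homComponent f m).IsSymmetric := by
  intro g
  ext d
  have hd : d = Finsupp.mapDomain g (Finsupp.equivMapDomain g.symm d) := by
    rw [← Finsupp.equivMapDomain_eq_mapDomain]
    ext i
    simp
  conv_lhs => rw [hd]
  rw [MvPolynomial.coeff_rename_mapDomain g g.injective, coeff_homComponent,
    coeff_homComponent, degree_equivMapDomain]
  rw [hf g.symm d]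

end Aux

/-- Every formal power series f ∈ R[[t₁, …, tₙ]] fixed by all permutations of the
variables lies in the image of the substitution homomorphism
R[[c₁, …, cₙ]] → R[[t₁, …, tₙ]], cᵢ ↦ eᵢ(t₁, …, tₙ). -/
theorem symmetric_mem_range_subst_esymm (R : Type*) [CommRing R] (n : ℕ)
    (f : MvPowerSeries (Fin n) R)
    (hf : ∀ (g : Equiv.Perm (Fin n)) (d : Fin n →₀ ℕ),
      MvPowerSeries.coeff (Finsupp.equivMapDomain g d) f = MvPowerSeries.coeff d f) :
    f ∈ Set.range
      (substPowerSeries (fun i : Fin n => MvPolynomial.esymm (Fin n) R (i.1 + 1))) := by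
  classical
  set a : Fin n → MvPolynomial (Fin n) R :=
    fun i => MvPolynomial.esymm (Fin n) R (i.1 + 1) with ha
  have hsurj : ∀ m : ℕ, ∃ P : MvPolynomial (Fin n) R,
      MvPolynomial.aeval a P = homComponent f m := by
    intro m
    obtain ⟨P, hP⟩ := MvPolynomial.esymmAlgHom_fin_surjective (R := R) (n := n) le_rfl
      ⟨homComponent f m, (MvPolynomial.mem_symmetricSubalgebra _).2
        (homComponent_isSymmetric f hf m)⟩
    refine ⟨P, ?_⟩
    have h2 := congrArg Subtype.val hP
    rwa [MvPolynomial.esymmAlgHom_apply] at h2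
  choose P hP using hsurj
  set w : (Fin n →₀ ℕ) → ℕ := fun e => ∑ i, (i.1 + 1) * e i with hw
  refine ⟨fun e => MvPolynomial.coeff e (P (w e)), ?_⟩
  funext d
  set m : ℕ := d.degree with hm
  have hhom : ∀ e : Fin n →₀ ℕ, (∏ i, a i ^ e i).IsHomogeneous (w e) :=
    fun e => MvPolynomial.IsHomogeneous.prod _ _ _
      (fun i _ => (esymm_isHom (Fin n) R (i.1 + 1)).pow (e i))
  have hzero : ∀ e : Fin n →₀ ℕ, w e ≠ m → MvPolynomial.coeff d (∏ i, a i ^ e i) = 0 :=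
    fun e h => (hhom e).coeff_eq_zero (fun hd => h hd.symm)
  show (∑ e ∈ Finset.Iic (Finsupp.equivFunOnFinite.symm fun _ : Fin n => d.sum fun _ k => k),
      MvPolynomial.coeff e (P (w e)) * MvPolynomial.coeff d (∏ i, a i ^ e i)) = f d
  have hBdef : (Finsupp.equivFunOnFinite.symm fun _ : Fin n => d.sum fun _ k => k)
      = Finsupp.equivFunOnFinite.symm fun _ : Fin n => m := rfl
  rw [hBdef]
  set B : Fin n →₀ ℕ := Finsupp.equivFunOnFinite.symm fun _ : Fin n => m with hB
  have step1 : ∀ e ∈ Finset.Iic B,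
      MvPolynomial.coeff e (P (w e)) * MvPolynomial.coeff d (∏ i, a i ^ e i)
        = MvPolynomial.coeff e (P m) * MvPolynomial.coeff d (∏ i, a i ^ e i) := by
    intro e _
    by_cases h : w e = m
    · rw [h]
    · rw [hzero e h, mul_zero, mul_zero]
  rw [Finset.sum_congr rfl step1]
  have step2 : (∑ e ∈ Finset.Iic B,
        MvPolynomial.coeff e (P m) * MvPolynomial.coeff d (∏ i, a i ^ e i))
      = ∑ e ∈ Finset.Iic B ∪ (P m).support,
        MvPolynomial.coeff e (P m) * MvPolynomial.coeff d (∏ i, a i ^ e i) := by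
    refine Finset.sum_subset Finset.subset_union_left ?_
    intro e _ he
    rw [Finset.mem_Iic, Finsupp.le_def] at he
    push_neg at he
    obtain ⟨i, hi⟩ := he
    have hBi : B i = m := rfl
    rw [hBi] at hi
    have h1 : e i ≤ w e := by
      calc e i ≤ (i.1 + 1) * e i := Nat.le_mul_of_pos_left _ (Nat.succ_pos _)
      _ ≤ w e := Finset.single_le_sum (f := fun j : Fin n => (j.1 + 1) * e j)
        (fun j _ => Nat.zero_le _) (Finset.mem_univ i)
    have : w e ≠ m := fun hweq => absurd (h1.trans_eq hweq) (not_le.mpr hi)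
    rw [hzero e this, mul_zero]
  rw [step2]
  have step3 : (∑ e ∈ Finset.Iic B ∪ (P m).support,
        MvPolynomial.coeff e (P m) * MvPolynomial.coeff d (∏ i, a i ^ e i))
      = ∑ e ∈ (P m).support,
        MvPolynomial.coeff e (P m) * MvPolynomial.coeff d (∏ i, a i ^ e i) := by
    refine (Finset.sum_subset Finset.subset_union_right ?_).symm
    intro e _ he
    rw [MvPolynomial.notMem_support_iff] at he
    rw [he, zero_mul]
  rw [step3]
  have expand : MvPolynomial.coeff d (MvPolynomial.aeval a (P m))
      = ∑ e ∈ (P m).support,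
        MvPolynomial.coeff e (P m) * MvPolynomial.coeff d (∏ i, a i ^ e i) := by
    conv_lhs => rw [(P m).as_sum]
    rw [map_sum, MvPolynomial.coeff_sum]
    refine Finset.sum_congr rfl fun e _ => ?_
    rw [MvPolynomial.aeval_monomial, Finsupp.prod_pow, MvPolynomial.algebraMap_eq,
      MvPolynomial.coeff_C_mul]
  rw [← expand, hP m, coeff_homComponent, if_pos rfl]
  rfl
end

section
/- Let R be a commutative ring and m, n natural numbers. The substitution ring homomorphism from R[[c′₁, …, c′ₘ, c″₁, …, c″ₙ]] to R[[t′₁, …, t′ₘ, t″₁, …, t″ₙ]] sending c′ᵢ to the i-th elementary symmetric polynomial in the variables t′₁, …, t′ₘ and c″ⱼ to the j-th elementary symmetric polynomial in the variables t″₁, …, t″ₙ is injective, and its image is exactly the subring of power series fixed by the blockwise action of Perm({1,…,m}) × Perm({1,…,n}) permuting the variables t′₁, …, t′ₘ among themselves and the variables t″₁, …, t″ₙ among themselves. -/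
/-- The family sending c′ᵢ (i.e. the inl-variables) to the i-th elementary symmetric
polynomial in the variables t′₁, …, t′ₘ and c″ⱼ (the inr-variables) to the j-th
elementary symmetric polynomial in the variables t″₁, …, t″ₙ. -/
noncomputable def blockEsymm (R : Type*) [CommRing R] (m n : ℕ) :
    Fin m ⊕ Fin n → MvPolynomial (Fin m ⊕ Fin n) R :=
  Sum.elim
    (fun i : Fin m => MvPolynomial.rename Sum.inl (MvPolynomial.esymm (Fin m) R (i.1 + 1)))
    (fun j : Fin n => MvPolynomial.rename Sum.inr (MvPolynomial.esymm (Fin n) R (j.1 + 1)))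

namespace BlockEsymmAux

open MvPolynomial Finset

variable (R : Type*) [CommRing R] (m n : ℕ)

/-- The weight of each variable. -/
def wt : Fin m ⊕ Fin n → ℕ := Sum.elim (fun i => i.1 + 1) (fun j => j.1 + 1)

lemma one_le_wt (s : Fin m ⊕ Fin n) : 1 ≤ wt m n s := by
  cases s <;> simp [wt]

/-- Weighted degree of an exponent. -/
def W (e : Fin m ⊕ Fin n →₀ ℕ) : ℕ := ∑ s, wt m n s * e s

/-- The substitution algebra homomorphism on polynomials. -/
noncomputable def Φ : MvPolynomial (Fin m ⊕ Fin n) R →ₐ[R] MvPolynomial (Fin m ⊕ Fin n) R :=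
  aeval (blockEsymm R m n)

lemma isHomogeneous_esymm (σ : Type*) [Fintype σ] (k : ℕ) :
    (esymm σ R k).IsHomogeneous k := by
  rw [esymm]
  apply IsHomogeneous.sum
  intro t ht
  have h : (∑ i ∈ t, 1 : ℕ) = k := by
    simpa using (Finset.mem_powersetCard.mp ht).2
  rw [← h]
  exact IsHomogeneous.prod t _ _ fun i _ => isHomogeneous_X _ _

lemma isHomogeneous_blockEsymm (s : Fin m ⊕ Fin n) :
    (blockEsymm R m n s).IsHomogeneous (wt m n s) := by
  cases s with
  | inl i =>
    simpa [blockEsymm, wt] using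
      (isHomogeneous_esymm R (Fin m) (i.1 + 1)).rename_isHomogeneous (f := Sum.inl)
  | inr j =>
    simpa [blockEsymm, wt] using
      (isHomogeneous_esymm R (Fin n) (j.1 + 1)).rename_isHomogeneous (f := Sum.inr)

lemma isHomogeneous_prod_pow (e : Fin m ⊕ Fin n →₀ ℕ) :
    (∏ s, blockEsymm R m n s ^ e s).IsHomogeneous (W m n e) :=
  IsHomogeneous.prod _ _ _ fun s _ => (isHomogeneous_blockEsymm R m n s).pow (e s)

lemma coeff_prod_pow_eq_zero {e d : Fin m ⊕ Fin n →₀ ℕ} (h : W m n e ≠ d.degree) :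
    coeff d (∏ s, blockEsymm R m n s ^ e s) = 0 :=
  (isHomogeneous_prod_pow R m n e).coeff_eq_zero (Ne.symm h)

lemma degree_eq_univ_sum (d : Fin m ⊕ Fin n →₀ ℕ) : d.degree = ∑ s, d s := by
  rw [Finsupp.degree]
  exact Finset.sum_subset (Finset.subset_univ _)
    (fun s _ hs => by simpa using Finsupp.notMem_support_iff.mp hs)

lemma apply_le_W (e : Fin m ⊕ Fin n →₀ ℕ) (s : Fin m ⊕ Fin n) : e s ≤ W m n e :=
  le_trans (Nat.le_mul_of_pos_left _ (one_le_wt m n s))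
    (Finset.single_le_sum (f := fun s => wt m n s * e s) (fun _ _ => Nat.zero_le _)
      (Finset.mem_univ s))

lemma apply_le_degree (d : Fin m ⊕ Fin n →₀ ℕ) (s : Fin m ⊕ Fin n) : d s ≤ d.degree := by
  rw [degree_eq_univ_sum]
  exact Finset.single_le_sum (f := fun s => d s) (fun _ _ => Nat.zero_le _) (Finset.mem_univ s)

/-- The finite set of exponents of weighted degree `k`. -/
noncomputable def Sk (k : ℕ) : Finset (Fin m ⊕ Fin n →₀ ℕ) :=
  (Finset.Iic (Finsupp.equivFunOnFinite.symm fun _ : Fin m ⊕ Fin n => k)).filter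
    (fun e => W m n e = k)

lemma mem_Sk {k : ℕ} {e : Fin m ⊕ Fin n →₀ ℕ} : e ∈ Sk m n k ↔ W m n e = k := by
  constructor
  · exact fun h => (Finset.mem_filter.mp h).2
  · intro h
    refine Finset.mem_filter.mpr ⟨Finset.mem_Iic.mpr ?_, h⟩
    intro s
    simpa using h ▸ apply_le_W m n e s

/-- The finite set of monomials of total degree `k`. -/
noncomputable def Tk (k : ℕ) : Finset (Fin m ⊕ Fin n →₀ ℕ) :=
  (Finset.Iic (Finsupp.equivFunOnFinite.symm fun _ : Fin m ⊕ Fin n => k)).filter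
    (fun d => d.degree = k)

lemma mem_Tk {k : ℕ} {d : Fin m ⊕ Fin n →₀ ℕ} : d ∈ Tk m n k ↔ d.degree = k := by
  constructor
  · exact fun h => (Finset.mem_filter.mp h).2
  · intro h
    refine Finset.mem_filter.mpr ⟨Finset.mem_Iic.mpr ?_, h⟩
    intro s
    simpa using h ▸ apply_le_degree m n d s

lemma coeff_Φ (P : MvPolynomial (Fin m ⊕ Fin n) R) (d : Fin m ⊕ Fin n →₀ ℕ) :
    coeff d (Φ R m n P) =
      ∑ e ∈ Sk m n d.degree, coeff e P * coeff d (∏ s, blockEsymm R m n s ^ e s) := by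
  classical
  have h1 : Φ R m n P = ∑ e ∈ P.support, C (coeff e P) * ∏ s, blockEsymm R m n s ^ e s := by
    conv_lhs => rw [P.as_sum]
    rw [map_sum]
    refine Finset.sum_congr rfl fun e _ => ?_
    rw [Φ, aeval_monomial, algebraMap_eq, Finsupp.prod_pow]
  rw [h1, coeff_sum]
  simp_rw [coeff_C_mul]
  rw [← Finset.sum_inter_add_sum_sdiff P.support (Sk m n d.degree)
    (fun e => coeff e P * coeff d (∏ s, blockEsymm R m n s ^ e s))]
  rw [← Finset.sum_inter_add_sum_sdiff (Sk m n d.degree) P.support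
    (fun e => coeff e P * coeff d (∏ s, blockEsymm R m n s ^ e s))]
  rw [Finset.inter_comm]
  congr 1
  · rw [Finset.sum_eq_zero, Finset.sum_eq_zero]
    · intro e he
      rw [Finset.mem_sdiff] at he
      rw [MvPolynomial.notMem_support_iff.mp he.2, zero_mul]
    · intro e he
      rw [Finset.mem_sdiff] at he
      rw [coeff_prod_pow_eq_zero R m n (fun hW => he.2 (mem_Sk m n |>.mpr hW)), mul_zero]

end BlockEsymmAux

namespace BlockEsymmAux
open MvPolynomial Finset
variable (R : Type*) [CommRing R] (m n : ℕ)

/-- Coefficient substitution: elementary symmetric polynomials in the second block. -/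
noncomputable def γ : MvPolynomial (Fin n) R →ₐ[R] MvPolynomial (Fin n) R :=
  aeval (fun j : Fin n => esymm (Fin n) R (j.1 + 1))

lemma γ_eq (x : MvPolynomial (Fin n) R) : γ R n x = (esymmAlgHom (Fin n) R n x).val :=
  (esymmAlgHom_apply x).symm

lemma γ_injective : Function.Injective (γ R n) := by
  intro x y h
  apply esymmAlgHom_fin_injective R (le_refl n)
  exact Subtype.ext (by rw [← γ_eq, ← γ_eq, h])

lemma γ_symmetric (x : MvPolynomial (Fin n) R) : (γ R n x).IsSymmetric := by
  rw [γ_eq]; exact (esymmAlgHom (Fin n) R n x).2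

lemma γ_surjective_on_symmetric {s : MvPolynomial (Fin n) R} (hs : s.IsSymmetric) :
    ∃ x, γ R n x = s := by
  obtain ⟨x, hx⟩ := (esymmAlgHom_fin_bijective R n).2 ⟨s, hs⟩
  exact ⟨x, by rw [γ_eq, hx]⟩

/-- Outer substitution over the coefficient ring `S`. -/
noncomputable def Ψ₂ : MvPolynomial (Fin m) (MvPolynomial (Fin n) R)
    →ₐ[MvPolynomial (Fin n) R] MvPolynomial (Fin m) (MvPolynomial (Fin n) R) :=
  aeval (fun i : Fin m => esymm (Fin m) (MvPolynomial (Fin n) R) (i.1 + 1))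

lemma Ψ₂_eq (x : MvPolynomial (Fin m) (MvPolynomial (Fin n) R)) :
    Ψ₂ R m n x = (esymmAlgHom (Fin m) (MvPolynomial (Fin n) R) m x).val :=
  (esymmAlgHom_apply x).symm

lemma Ψ₂_injective : Function.Injective (Ψ₂ R m n) := by
  intro x y h
  apply esymmAlgHom_fin_injective (MvPolynomial (Fin n) R) (le_refl m)
  exact Subtype.ext (by rw [← Ψ₂_eq, ← Ψ₂_eq, h])

lemma Ψ₂_symmetric (x : MvPolynomial (Fin m) (MvPolynomial (Fin n) R)) :
    (Ψ₂ R m n x).IsSymmetric := by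
  rw [Ψ₂_eq]; exact (esymmAlgHom (Fin m) (MvPolynomial (Fin n) R) m x).2

lemma Ψ₂_surjective_on_symmetric {s : MvPolynomial (Fin m) (MvPolynomial (Fin n) R)}
    (hs : s.IsSymmetric) : ∃ x, Ψ₂ R m n x = s := by
  obtain ⟨x, hx⟩ := (esymmAlgHom_fin_bijective (MvPolynomial (Fin n) R) m).2 ⟨s, hs⟩
  exact ⟨x, by rw [Ψ₂_eq, hx]⟩

/-- The  equivalence separating the two blocks of variables. -/
noncomputable def E : MvPolynomial (Fin m ⊕ Fin n) R ≃ₐ[R]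
    MvPolynomial (Fin m) (MvPolynomial (Fin n) R) :=
  sumAlgEquiv R (Fin m) (Fin n)

lemma E_intertwine (p : MvPolynomial (Fin m ⊕ Fin n) R) :
    E R m n (Φ R m n p) = Ψ₂ R m n (map (γ R n).toRingHom (E R m n p)) := by
  have : ((E R m n).toAlgHom.comp (Φ R m n)) =
      ((Ψ₂ R m n).restrictScalars R |>.comp
        ((mapAlgHom (γ R n)).comp (E R m n).toAlgHom)) := by
    apply algHom_ext
    intro s
    cases s with
    | inl i =>
      simp only [AlgHom.comp_apply, AlgEquiv.toAlgHom_eq_coe, AlgHom.coe_coe, AlgEquiv.coe_toAlgHom]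
      rw [Φ, aeval_X]
      have h1 : (E R m n) (blockEsymm R m n (Sum.inl i)) =
          esymm (Fin m) (MvPolynomial (Fin n) R) (i.1 + 1) := by
        have := AlgHom.congr_fun (sumAlgEquiv_comp_rename_inl R (Fin m) (Fin n))
          (esymm (Fin m) R (i.1 + 1))
        simp only [AlgHom.comp_apply, AlgEquiv.toAlgHom_eq_coe, AlgHom.coe_coe, AlgEquiv.coe_toAlgHom] at this
        rw [blockEsymm]
        simp only [Sum.elim_inl]
        rw [E, this, mapAlgHom_apply]
        exact map_esymm (σ := Fin m) (R := R) (i.1 + 1) (Algebra.ofId R (MvPolynomial (Fin n) R)).toRingHom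
      rw [h1]
      have h2 : (E R m n) (X (Sum.inl i)) = X i := by
        rw [E]; exact sumAlgEquiv_X_inl _ _ _ _
      rw [h2, mapAlgHom_apply]
      rw [map_X]
      rw [AlgHom.restrictScalars_apply, Ψ₂, aeval_X]
    | inr j =>
      simp only [AlgHom.comp_apply, AlgEquiv.toAlgHom_eq_coe, AlgHom.coe_coe, AlgEquiv.coe_toAlgHom]
      rw [Φ, aeval_X]
      have h1 : (E R m n) (blockEsymm R m n (Sum.inr j)) =
          C (esymm (Fin n) R (j.1 + 1)) := by
        have := AlgHom.congr_fun (sumAlgEquiv_comp_rename_inr R (Fin m) (Fin n))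
          (esymm (Fin n) R (j.1 + 1))
        simp only [AlgHom.comp_apply, AlgEquiv.toAlgHom_eq_coe, AlgHom.coe_coe, AlgEquiv.coe_toAlgHom] at this
        rw [blockEsymm]
        simp only [Sum.elim_inr]
        rw [E, this]
        rfl
      rw [h1]
      have h2 : (E R m n) (X (Sum.inr j)) = C (X j) := by
        rw [E]; exact sumAlgEquiv_X_inr _ _ _ _
      rw [h2, mapAlgHom_apply]
      rw [map_C]
      rw [AlgHom.restrictScalars_apply, Ψ₂, aeval_C, algebraMap_eq]
      congr 1
      simp [γ]
  exact AlgHom.congr_fun this p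

end BlockEsymmAux

namespace BlockEsymmAux
open MvPolynomial Finset
variable (R : Type*) [CommRing R] (m n : ℕ)

lemma Ψ₂_C (s : MvPolynomial (Fin n) R) : Ψ₂ R m n (C s) = C s := by
  rw [Ψ₂, aeval_C, algebraMap_eq]

lemma Ψ₂_X (i : Fin m) :
    Ψ₂ R m n (X i) = esymm (Fin m) (MvPolynomial (Fin n) R) (i.1 + 1) := by
  rw [Ψ₂, aeval_X]

lemma rename_one_outer (q : MvPolynomial (Fin m) (MvPolynomial (Fin n) R)) :
    rename ⇑(1 : Equiv.Perm (Fin m)) q = q := by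
  rw [Equiv.Perm.coe_one, rename_id_apply]

lemma Φ_injective : Function.Injective (Φ R m n) := by
  intro p q hpq
  have h1 : Ψ₂ R m n (map (γ R n).toRingHom (E R m n p)) =
      Ψ₂ R m n (map (γ R n).toRingHom (E R m n q)) := by
    rw [← E_intertwine, ← E_intertwine, hpq]
  have h2 := MvPolynomial.map_injective _ (γ_injective R n) (Ψ₂_injective R m n h1)
  exact (E R m n).injective h2

lemma rename_Φ (g : Equiv.Perm (Fin m)) (h : Equiv.Perm (Fin n))
    (p : MvPolynomial (Fin m ⊕ Fin n) R) :
    rename (⇑(Equiv.sumCongr g h)) (Φ R m n p) = Φ R m n p := by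
  have key : (rename (R := R) ⇑(Equiv.sumCongr g h)).comp (Φ R m n) = Φ R m n := by
    apply algHom_ext
    intro s
    simp only [AlgHom.comp_apply]
    rw [Φ, aeval_X]
    cases s with
    | inl i =>
      rw [blockEsymm]
      simp only [Sum.elim_inl]
      rw [rename_rename]
      have hc : ⇑(Equiv.sumCongr g h) ∘ Sum.inl = Sum.inl ∘ ⇑g := by
        funext x; simp
      rw [hc, ← rename_rename, esymm_isSymmetric _ _ _ g]
    | inr j =>
      rw [blockEsymm]
      simp only [Sum.elim_inr]
      rw [rename_rename]
      have hc : ⇑(Equiv.sumCongr g h) ∘ Sum.inr = Sum.inr ∘ ⇑h := by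
        funext x; simp
      rw [hc, ← rename_rename, esymm_isSymmetric _ _ _ h]
  exact AlgHom.congr_fun key p

lemma E_rename (g : Equiv.Perm (Fin m)) (h : Equiv.Perm (Fin n))
    (p : MvPolynomial (Fin m ⊕ Fin n) R) :
    E R m n (rename (⇑(Equiv.sumCongr g h)) p) =
      rename ⇑g (map (rename (R := R) ⇑h).toRingHom (E R m n p)) := by
  have key : (E R m n).toAlgHom.comp (rename (R := R) ⇑(Equiv.sumCongr g h)) =
      (((rename (R := MvPolynomial (Fin n) R) ⇑g).restrictScalars R).comp
        (mapAlgHom (rename (R := R) ⇑h))).comp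
        (E R m n).toAlgHom := by
    apply algHom_ext
    intro s
    simp only [AlgHom.comp_apply, AlgEquiv.toAlgHom_eq_coe, AlgHom.coe_coe, AlgEquiv.coe_toAlgHom]
    cases s with
    | inl i =>
      rw [rename_X]
      simp only [Equiv.sumCongr_apply, Sum.map_inl]
      have h1 : (E R m n) (X (Sum.inl (g i))) = X (g i) := by
        rw [E]; exact sumAlgEquiv_X_inl _ _ _ _
      have h2 : (E R m n) (X (Sum.inl i)) = X i := by
        rw [E]; exact sumAlgEquiv_X_inl _ _ _ _
      rw [h1, h2, mapAlgHom_apply, map_X, AlgHom.restrictScalars_apply, rename_X]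
    | inr j =>
      rw [rename_X]
      simp only [Equiv.sumCongr_apply, Sum.map_inr]
      have h1 : (E R m n) (X (Sum.inr (h j))) = C (X (h j)) := by
        rw [E]; exact sumAlgEquiv_X_inr _ _ _ _
      have h2 : (E R m n) (X (Sum.inr j)) = C (X j) := by
        rw [E]; exact sumAlgEquiv_X_inr _ _ _ _
      rw [h1, h2, mapAlgHom_apply, map_C, AlgHom.restrictScalars_apply, rename_C]
      congr 1
      simp
  have := AlgHom.congr_fun key p
  simpa using this

lemma map_rename_Ψ₂ (h : Equiv.Perm (Fin n))
    (q : MvPolynomial (Fin m) (MvPolynomial (Fin n) R)) :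
    map (rename (R := R) ⇑h).toRingHom (Ψ₂ R m n q) =
      Ψ₂ R m n (map (rename (R := R) ⇑h).toRingHom q) := by
  have key : (MvPolynomial.map (rename (R := R) ⇑h).toRingHom).comp
        (Ψ₂ R m n).toRingHom =
      (Ψ₂ R m n).toRingHom.comp (MvPolynomial.map (rename (R := R) ⇑h).toRingHom) := by
    apply ringHom_ext
    · intro s
      simp only [RingHom.comp_apply, AlgHom.toRingHom_eq_coe, RingHom.coe_coe]
      rw [Ψ₂_C, map_C, Ψ₂_C]
    · intro i
      simp only [RingHom.comp_apply, AlgHom.toRingHom_eq_coe, RingHom.coe_coe]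
      rw [Ψ₂_X, map_X, map_esymm, Ψ₂_X]
  exact RingHom.congr_fun key q

lemma mem_range_map_gamma {q : MvPolynomial (Fin m) (MvPolynomial (Fin n) R)}
    (hq : ∀ d, (coeff d q).IsSymmetric) :
    ∃ q', map (γ R n).toRingHom q' = q := by
  classical
  choose r hr using fun d => γ_surjective_on_symmetric R n (hq d)
  refine ⟨∑ d ∈ q.support, monomial d (r d), ?_⟩
  apply MvPolynomial.ext
  intro d
  rw [coeff_map]
  have hc : coeff d (∑ d' ∈ q.support, monomial d' (r d')) =
      if d ∈ q.support then r d else 0 := by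
    rw [coeff_sum]
    simp_rw [coeff_monomial]
    exact Finset.sum_ite_eq' q.support d r
  rw [hc]
  by_cases hd : d ∈ q.support
  · rw [if_pos hd]
    exact hr d
  · rw [if_neg hd, map_zero]
    exact (MvPolynomial.notMem_support_iff.mp hd).symm

lemma map_rename_perm_one (q : MvPolynomial (Fin m) (MvPolynomial (Fin n) R)) :
    map (rename (R := R) ⇑(1 : Equiv.Perm (Fin n))).toRingHom q = q := by
  have h1 : (rename (R := R) ⇑(1 : Equiv.Perm (Fin n))).toRingHom =
      RingHom.id (MvPolynomial (Fin n) R) := by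
    refine RingHom.ext fun p => ?_
    simp only [AlgHom.toRingHom_eq_coe, RingHom.coe_coe, RingHom.id_apply]
    rw [Equiv.Perm.coe_one, rename_id_apply]
  rw [h1, map_id]

lemma invariant_mem_range {p : MvPolynomial (Fin m ⊕ Fin n) R}
    (hp : ∀ (g : Equiv.Perm (Fin m)) (h : Equiv.Perm (Fin n)),
      rename (⇑(Equiv.sumCongr g h)) p = p) :
    ∃ q, Φ R m n q = p := by
  have hsym : (E R m n p).IsSymmetric := by
    intro g
    have h0 := E_rename R m n g 1 p
    rw [hp g 1, map_rename_perm_one] at h0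
    exact h0.symm
  have hcoeff : ∀ d, (coeff d (E R m n p)).IsSymmetric := by
    intro d h
    have h0 := E_rename R m n 1 h p
    rw [hp 1 h] at h0
    rw [rename_one_outer] at h0
    calc rename (⇑h) (coeff d (E R m n p))
        = coeff d (map (rename (R := R) ⇑h).toRingHom (E R m n p)) := (coeff_map _ _ _).symm
      _ = coeff d (E R m n p) := by rw [← h0]
  obtain ⟨q2, hq2⟩ := Ψ₂_surjective_on_symmetric R m n hsym
  have hq2coeff : ∀ d, (coeff d q2).IsSymmetric := by
    intro d h
    have h1 : Ψ₂ R m n (map (rename (R := R) ⇑h).toRingHom q2) = Ψ₂ R m n q2 := by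
      rw [← map_rename_Ψ₂, hq2]
      have h0 := E_rename R m n 1 h p
      rw [hp 1 h] at h0
      rw [rename_one_outer] at h0
      rw [← h0]
    have h2 := Ψ₂_injective R m n h1
    calc rename (⇑h) (coeff d q2)
        = coeff d (map (rename (R := R) ⇑h).toRingHom q2) := (coeff_map _ _ _).symm
      _ = coeff d q2 := by rw [h2]
  obtain ⟨q1, hq1⟩ := mem_range_map_gamma R m n hq2coeff
  refine ⟨(E R m n).symm q1, ?_⟩
  apply (E R m n).injective
  rw [E_intertwine, AlgEquiv.apply_symm_apply, hq1, hq2]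

end BlockEsymmAux

namespace BlockEsymmAux
open MvPolynomial Finset
variable (R : Type*) [CommRing R] (m n : ℕ)

lemma substPowerSeries_coeff (f : MvPowerSeries (Fin m ⊕ Fin n) R) (d : Fin m ⊕ Fin n →₀ ℕ) :
    substPowerSeries (blockEsymm R m n) f d =
      ∑ e ∈ Sk m n d.degree,
        MvPowerSeries.coeff e f * coeff d (∏ s, blockEsymm R m n s ^ e s) := by
  rw [substPowerSeries]
  have hd : (d.sum fun _ k => k) = d.degree := rfl
  rw [hd]
  symm
  apply Finset.sum_subset
  · exact Finset.filter_subset _ _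
  · intro e _ hnot
    have hW : W m n e ≠ d.degree := fun hW => hnot ((mem_Sk m n).mpr hW)
    rw [coeff_prod_pow_eq_zero R m n hW, mul_zero]

/-- The weighted-degree-`k` part of a source power series, as a polynomial. -/
noncomputable def Pf (k : ℕ) (f : MvPowerSeries (Fin m ⊕ Fin n) R) :
    MvPolynomial (Fin m ⊕ Fin n) R :=
  ∑ e ∈ Sk m n k, monomial e (MvPowerSeries.coeff e f)

lemma coeff_Pf (k : ℕ) (f : MvPowerSeries (Fin m ⊕ Fin n) R) (e : Fin m ⊕ Fin n →₀ ℕ) :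
    coeff e (Pf R m n k f) = if e ∈ Sk m n k then MvPowerSeries.coeff e f else 0 := by
  rw [Pf, coeff_sum]
  simp_rw [coeff_monomial]
  exact Finset.sum_ite_eq' _ _ _

lemma coeff_Φ_Pf (f : MvPowerSeries (Fin m ⊕ Fin n) R) (d : Fin m ⊕ Fin n →₀ ℕ) :
    coeff d (Φ R m n (Pf R m n d.degree f)) = substPowerSeries (blockEsymm R m n) f d := by
  rw [coeff_Φ, substPowerSeries_coeff]
  refine Finset.sum_congr rfl fun e he => ?_
  rw [coeff_Pf, if_pos he]

lemma isHomogeneous_Φ_Pf (k : ℕ) (f : MvPowerSeries (Fin m ⊕ Fin n) R) :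
    (Φ R m n (Pf R m n k f)).IsHomogeneous k := by
  rw [Pf, map_sum]
  apply IsHomogeneous.sum
  intro e he
  rw [Φ, aeval_monomial, algebraMap_eq, Finsupp.prod_pow]
  have h1 := (isHomogeneous_C (Fin m ⊕ Fin n)
    (MvPowerSeries.coeff e f)).mul (isHomogeneous_prod_pow R m n e)
  rwa [zero_add, (mem_Sk m n).mp he] at h1

lemma subst_injective : Function.Injective (substPowerSeries (blockEsymm R m n)) := by
  intro f g hfg
  funext e
  set k := W m n e with hk
  have hPf : Φ R m n (Pf R m n k f) = Φ R m n (Pf R m n k g) := by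
    apply MvPolynomial.ext
    intro d
    by_cases hd : d.degree = k
    · rw [← hd, coeff_Φ_Pf, coeff_Φ_Pf, hfg]
    · rw [(isHomogeneous_Φ_Pf R m n k f).coeff_eq_zero hd,
        (isHomogeneous_Φ_Pf R m n k g).coeff_eq_zero hd]
  have h1 := congrArg (coeff e) (Φ_injective R m n hPf)
  have hmem := (mem_Sk m n).mpr hk.symm
  rw [coeff_Pf, coeff_Pf, if_pos hmem, if_pos hmem] at h1
  exact h1

lemma subst_invariant (f : MvPowerSeries (Fin m ⊕ Fin n) R) (g : Equiv.Perm (Fin m))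
    (h : Equiv.Perm (Fin n)) (d : Fin m ⊕ Fin n →₀ ℕ) :
    MvPowerSeries.coeff (Finsupp.equivMapDomain (Equiv.sumCongr g h) d)
      (substPowerSeries (blockEsymm R m n) f) =
    MvPowerSeries.coeff d (substPowerSeries (blockEsymm R m n) f) := by
  set d' := Finsupp.equivMapDomain (Equiv.sumCongr g h) d with hd'
  have hdeg : d'.degree = d.degree := by
    rw [degree_eq_univ_sum, degree_eq_univ_sum, hd']
    simp_rw [Finsupp.equivMapDomain_apply]
    exact Equiv.sum_comp (Equiv.sumCongr g h).symm (fun s => d s)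
  rw [MvPowerSeries.coeff_apply, MvPowerSeries.coeff_apply, ← coeff_Φ_Pf, ← coeff_Φ_Pf, hdeg]
  conv_lhs => rw [← rename_Φ R m n g h (Pf R m n d.degree f)]
  rw [hd', Finsupp.equivMapDomain_eq_mapDomain]
  exact coeff_rename_mapDomain _ (Equiv.injective _) _ _

/-- The degree-`k` part of a target power series, as a polynomial. -/
noncomputable def Fk (k : ℕ) (F : MvPowerSeries (Fin m ⊕ Fin n) R) :
    MvPolynomial (Fin m ⊕ Fin n) R :=
  ∑ d ∈ Tk m n k, monomial d (MvPowerSeries.coeff d F)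

lemma coeff_Fk (k : ℕ) (F : MvPowerSeries (Fin m ⊕ Fin n) R) (d : Fin m ⊕ Fin n →₀ ℕ) :
    coeff d (Fk R m n k F) = if d ∈ Tk m n k then MvPowerSeries.coeff d F else 0 := by
  rw [Fk, coeff_sum]
  simp_rw [coeff_monomial]
  exact Finset.sum_ite_eq' _ _ _

lemma Fk_invariant (k : ℕ) (F : MvPowerSeries (Fin m ⊕ Fin n) R)
    (hF : ∀ (g : Equiv.Perm (Fin m)) (h : Equiv.Perm (Fin n)) (d : Fin m ⊕ Fin n →₀ ℕ),
      MvPowerSeries.coeff (Finsupp.equivMapDomain (Equiv.sumCongr g h) d) F =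
        MvPowerSeries.coeff d F)
    (g : Equiv.Perm (Fin m)) (h : Equiv.Perm (Fin n)) :
    rename (⇑(Equiv.sumCongr g h)) (Fk R m n k F) = Fk R m n k F := by
  rw [Fk, map_sum]
  simp_rw [rename_monomial]
  refine Finset.sum_nbij' (fun d => Finsupp.equivMapDomain (Equiv.sumCongr g h) d)
    (fun d => Finsupp.equivMapDomain (Equiv.sumCongr g h).symm d) ?_ ?_ ?_ ?_ ?_
  · intro d hd
    rw [mem_Tk] at hd ⊢
    rw [← hd, degree_eq_univ_sum, degree_eq_univ_sum]
    simp_rw [Finsupp.equivMapDomain_apply]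
    exact Equiv.sum_comp (Equiv.sumCongr g h).symm (fun s => d s)
  · intro d hd
    rw [mem_Tk] at hd ⊢
    rw [← hd, degree_eq_univ_sum, degree_eq_univ_sum]
    simp_rw [Finsupp.equivMapDomain_apply]
    exact Equiv.sum_comp (Equiv.sumCongr g h) (fun s => d s)
  · intro d _
    ext a
    simp [Finsupp.equivMapDomain_apply]
  · intro d _
    ext a
    simp [Finsupp.equivMapDomain_apply]
  · intro d _
    rw [← Finsupp.equivMapDomain_eq_mapDomain, hF g h d]

lemma subst_surjective (F : MvPowerSeries (Fin m ⊕ Fin n) R)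
    (hF : ∀ (g : Equiv.Perm (Fin m)) (h : Equiv.Perm (Fin n)) (d : Fin m ⊕ Fin n →₀ ℕ),
      MvPowerSeries.coeff (Finsupp.equivMapDomain (Equiv.sumCongr g h) d) F =
        MvPowerSeries.coeff d F) :
    ∃ f, substPowerSeries (blockEsymm R m n) f = F := by
  have hQ : ∀ k : ℕ, ∃ q, Φ R m n q = Fk R m n k F := fun k =>
    invariant_mem_range R m n (fun g h => Fk_invariant R m n k F hF g h)
  choose Q hQ using hQ
  refine ⟨fun e => coeff e (Q (W m n e)), ?_⟩
  funext d
  erw [substPowerSeries_coeff]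
  have h1 : ∀ e ∈ Sk m n d.degree,
      MvPowerSeries.coeff e (fun e => coeff e (Q (W m n e))) *
          coeff d (∏ s, blockEsymm R m n s ^ e s) =
        coeff e (Q d.degree) * coeff d (∏ s, blockEsymm R m n s ^ e s) := by
    intro e he
    erw [MvPowerSeries.coeff_apply, (mem_Sk m n).mp he]
  erw [Finset.sum_congr rfl h1, ← coeff_Φ R m n (Q d.degree) d, hQ, coeff_Fk,
    if_pos ((mem_Tk m n).mpr rfl)]
  rfl

end BlockEsymmAux

/-- The substitution homomorphism R[[c′₁, …, c′ₘ, c″₁, …, c″ₙ]] → R[[t′₁, …, t′ₘ, t″₁, …, t″ₙ]],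
c′ᵢ ↦ eᵢ(t′₁, …, t′ₘ), c″ⱼ ↦ eⱼ(t″₁, …, t″ₙ), is injective, and its image is exactly the
set of power series fixed by the blockwise action of Perm(Fin m) × Perm(Fin n) permuting
the t′-variables among themselves and the t″-variables among themselves. -/

theorem subst_blockEsymm_injective_range (R : Type*) [CommRing R] (m n : ℕ) :
    Function.Injective (substPowerSeries (blockEsymm R m n)) ∧
    Set.range (substPowerSeries (blockEsymm R m n)) =
      {F : MvPowerSeries (Fin m ⊕ Fin n) R |
        ∀ (g : Equiv.Perm (Fin m)) (h : Equiv.Perm (Fin n)) (d : Fin m ⊕ Fin n →₀ ℕ),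
          MvPowerSeries.coeff (Finsupp.equivMapDomain (Equiv.sumCongr g h) d) F =
            MvPowerSeries.coeff d F} := by
  constructor
  · exact BlockEsymmAux.subst_injective R m n
  · ext F
    constructor
    · rintro ⟨f, rfl⟩ g h d
      exact BlockEsymmAux.subst_invariant R m n f g h d
    · intro hF
      exact BlockEsymmAux.subst_surjective R m n F hF
end
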